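/- Let q ≥ 1 and let a_1,…,a_q, b_1,…,b_q be positive reals satisfying both e_i(b) ≥ e_i(a) for all i and the monotonicity chain e_q(b)/e_q(a) ≥ ⋯ ≥ e_1(b)/e_1(a) ≥ 1. Then for all x ≥ 0, the refined two-sided bound holds: 1 + (f_1²/f_2)(e^{(f_2/f_1)x} − 1) ≤ qFq(a;b;x) ≤ 1 − f_2 + (f_1 − f_2)x + f_2 e^x, where f_n = ∏_{i=1}^q (a_i)_n/(b_i)_n. -/

import Mathlib

open Finset Real MeasureTheory

noncomputable def rise (a : ℝ) (n : ℕ) : ℝ := ∏ k ∈ Finset.range n, (a + k)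

noncomputable def esym {q : ℕ} (k : ℕ) (a : Fin q → ℝ) : ℝ :=
  ∑ s ∈ Finset.powersetCard k (Finset.univ : Finset (Fin q)), ∏ i ∈ s, a i

lemma tsum_exp (y : ℝ) : (∑' n : ℕ, y ^ n / n.factorial) = Real.exp y := by
  rw [Real.exp_eq_exp_ℝ, NormedSpace.exp_eq_tsum_div]

lemma expand {q : ℕ} (v : Fin q → ℝ) (c : ℝ) :
    ∏ i, (v i + c) = ∑ k ∈ Finset.range (q+1), esym k v * c ^ (q - k) := by
  rw [Finset.prod_add]
  rw [show (Finset.univ : Finset (Fin q)).powerset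
      = (Finset.range ((Finset.univ : Finset (Fin q)).card + 1)).disjiUnion
        (fun i => Finset.powersetCard i Finset.univ)
        ((Finset.univ : Finset (Fin q)).pairwise_disjoint_powersetCard.set_pairwise _) from
      Finset.powerset_card_disjiUnion _]
  erw [Finset.sum_disjiUnion]
  simp only [Finset.card_univ, Fintype.card_fin]
  refine Finset.sum_congr rfl fun k hk => ?_
  rw [esym, Finset.sum_mul]
  refine Finset.sum_congr rfl fun s hs => ?_
  rw [Finset.mem_powersetCard] at hs
  rw [Finset.prod_const]
  congr 1
  rw [Finset.card_sdiff_of_subset hs.1, Finset.card_univ, Fintype.card_fin, hs.2]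

lemma esym_pos {q : ℕ} {v : Fin q → ℝ} (hv : ∀ i, 0 < v i) {k : ℕ} (hk : k ≤ q) :
    0 < esym k v := by
  apply Finset.sum_pos
  · intro s _
    exact Finset.prod_pos fun i _ => hv i
  · apply Finset.powersetCard_nonempty.2
    simpa using hk

lemma esym_nonneg {q : ℕ} {v : Fin q → ℝ} (hv : ∀ i, 0 < v i) (k : ℕ) :
    0 ≤ esym k v :=
  Finset.sum_nonneg fun s _ => Finset.prod_nonneg fun i _ => (hv i).le

lemma esym_zero {q : ℕ} (v : Fin q → ℝ) : esym 0 v = 1 := by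
  simp [esym]

section main
variable {q : ℕ} {a b : Fin q → ℝ}
  (ha : ∀ i, 0 < a i) (hb : ∀ i, 0 < b i)
  (he : ∀ i : ℕ, 1 ≤ i → i ≤ q → esym i a ≤ esym i b)
  (hchain : ∀ i : ℕ, i < q → esym i b / esym i a ≤ esym (i + 1) b / esym (i + 1) a)

include ha hb hchain in
lemma chain' : ∀ k l : ℕ, k ≤ l → l ≤ q → esym l a * esym k b ≤ esym k a * esym l b := by
  intro k l hkl hlq
  induction l with
  | zero =>
    interval_cases k
    exact le_refl _
  | succ m ih =>
    rcases Nat.eq_or_lt_of_le hkl with h | h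
    · subst h; exact le_refl _
    · have hkm : k ≤ m := Nat.lt_succ_iff.mp h
      have hmq : m < q := hlq
      have step : esym m b * esym (m+1) a ≤ esym (m+1) b * esym m a := by
        have := hchain m hmq
        rw [div_le_div_iff₀ (esym_pos ha (le_of_lt hmq)) (esym_pos ha hlq)] at this
        linarith
      have ihm := ih hkm (le_of_lt hmq)
      have hma : 0 < esym m a := esym_pos ha (le_of_lt hmq)
      have hmb : 0 < esym m b := esym_pos hb (le_of_lt hmq)
      have hkb : 0 < esym k b := esym_pos hb (le_trans hkm (le_of_lt hmq))
      have hm1b : 0 < esym (m+1) b := esym_pos hb hlq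
      have key : esym (m+1) a * esym k b * esym m b ≤ esym k a * esym (m+1) b * esym m b := by
        calc esym (m+1) a * esym k b * esym m b
            = (esym m b * esym (m+1) a) * esym k b := by ring
          _ ≤ (esym (m+1) b * esym m a) * esym k b := by
              exact mul_le_mul_of_nonneg_right step hkb.le
          _ = esym (m+1) b * (esym m a * esym k b) := by ring
          _ ≤ esym (m+1) b * (esym k a * esym m b) := by
              exact mul_le_mul_of_nonneg_left ihm hm1b.le
          _ = esym k a * esym (m+1) b * esym m b := by ring
      exact le_of_mul_le_mul_right key hmb

include ha hb he in
lemma prodP : ∀ n : ℕ, (∏ i, (a i + (n:ℝ))) ≤ ∏ i, (b i + (n:ℝ)) := by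
  intro n
  rw [expand a (n:ℝ), expand b (n:ℝ)]
  refine Finset.sum_le_sum fun k hk => ?_
  rcases Nat.eq_zero_or_pos k with h | h
  · subst h; rw [esym_zero, esym_zero]
  · refine mul_le_mul_of_nonneg_right (he k h ?_) (pow_nonneg (Nat.cast_nonneg n) _)
    rw [Finset.mem_range] at hk; omega

include ha hb hchain in
lemma prodQ : ∀ m n : ℕ, m ≤ n →
    (∏ i, (a i + (m:ℝ))) * ∏ i, (b i + (n:ℝ))
      ≤ (∏ i, (a i + (n:ℝ))) * ∏ i, (b i + (m:ℝ)) := by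
  intro m n hmn
  rw [expand a (m:ℝ), expand a (n:ℝ), expand b (m:ℝ), expand b (n:ℝ)]
  rw [Finset.sum_mul_sum, Finset.sum_mul_sum]
  rw [← sub_nonneg, ← Finset.sum_sub_distrib]
  simp_rw [← Finset.sum_sub_distrib]
  set d : ℕ → ℕ → ℝ := fun k l =>
    esym k a * (n:ℝ) ^ (q - k) * (esym l b * (m:ℝ) ^ (q - l))
      - esym k a * (m:ℝ) ^ (q - k) * (esym l b * (n:ℝ) ^ (q - l)) with hd
  have key : ∀ k ∈ Finset.range (q+1), ∀ l ∈ Finset.range (q+1), 0 ≤ d k l + d l k := by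
    have main : ∀ k l : ℕ, k ≤ l → l ≤ q → 0 ≤ d k l + d l k := by
      intro k l hkl hlq
      have hΦ : (m:ℝ) ^ (q - k) * (n:ℝ) ^ (q - l) ≤ (n:ℝ) ^ (q - k) * (m:ℝ) ^ (q - l) := by
        have hqk : q - k = (q - l) + (l - k) := by omega
        rw [hqk, pow_add, pow_add]
        have h1 : ((m:ℝ)) ^ (l - k) ≤ ((n:ℝ)) ^ (l - k) :=
          pow_le_pow_left₀ (Nat.cast_nonneg m) (Nat.cast_le.mpr hmn) _
        have h2 : (0:ℝ) ≤ (m:ℝ) ^ (q - l) := pow_nonneg (Nat.cast_nonneg m) _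
        have h3 : (0:ℝ) ≤ (n:ℝ) ^ (q - l) := pow_nonneg (Nat.cast_nonneg n) _
        have h4 : (0:ℝ) ≤ (m:ℝ) ^ (l - k) := pow_nonneg (Nat.cast_nonneg m) _
        nlinarith [mul_le_mul_of_nonneg_left h1 (mul_nonneg h2 h3)]
      have hc : esym l a * esym k b ≤ esym k a * esym l b := chain' ha hb hchain k l hkl hlq
      have : d k l + d l k
          = (esym k a * esym l b - esym l a * esym k b)
            * ((n:ℝ) ^ (q - k) * (m:ℝ) ^ (q - l) - (m:ℝ) ^ (q - k) * (n:ℝ) ^ (q - l)) := by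
        rw [hd]; ring
      rw [this]
      exact mul_nonneg (by linarith) (by linarith)
    intro k hk l hl
    rw [Finset.mem_range] at hk hl
    rcases le_total k l with h | h
    · exact main k l h (by omega)
    · have := main l k h (by omega); linarith
  have h2 : (0:ℝ) ≤ ∑ k ∈ Finset.range (q+1), ∑ l ∈ Finset.range (q+1), (d k l + d l k) :=
    Finset.sum_nonneg fun k hk => Finset.sum_nonneg fun l hl => key k hk l hl
  have h3 : ∑ k ∈ Finset.range (q+1), ∑ l ∈ Finset.range (q+1), (d k l + d l k)
      = (∑ k ∈ Finset.range (q+1), ∑ l ∈ Finset.range (q+1), d k l)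
        + ∑ k ∈ Finset.range (q+1), ∑ l ∈ Finset.range (q+1), d l k := by
    rw [← Finset.sum_add_distrib]
    refine Finset.sum_congr rfl fun k _ => ?_
    rw [← Finset.sum_add_distrib]
  have h4 : (∑ k ∈ Finset.range (q+1), ∑ l ∈ Finset.range (q+1), d l k)
      = ∑ k ∈ Finset.range (q+1), ∑ l ∈ Finset.range (q+1), d k l := Finset.sum_comm
  linarith [h2, h3.symm, h4]
end main

theorem stmt4 (q : ℕ) (hq : 1 ≤ q) (a b : Fin q → ℝ)
    (ha : ∀ i, 0 < a i) (hb : ∀ i, 0 < b i)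
    (he : ∀ i : ℕ, 1 ≤ i → i ≤ q → esym i a ≤ esym i b)
    (hchain : ∀ i : ℕ, i < q → esym i b / esym i a ≤ esym (i + 1) b / esym (i + 1) a)
    (f : ℕ → ℝ)
    (hf : ∀ n, f n = (∏ i, rise (a i) n) / (∏ i, rise (b i) n))
    (x : ℝ) (hx : 0 ≤ x) :
    1 + f 1 ^ 2 / f 2 * (Real.exp ((f 2 / f 1) * x) - 1)
      ≤ (∑' n : ℕ, f n * x ^ n / (Nat.factorial n)) ∧
    (∑' n : ℕ, f n * x ^ n / (Nat.factorial n))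
      ≤ 1 - f 2 + (f 1 - f 2) * x + f 2 * Real.exp x := by
  -- positivity of pochhammer products
  have hrise : ∀ (v : Fin q → ℝ), (∀ i, 0 < v i) → ∀ n, 0 < ∏ i, rise (v i) n := by
    intro v hv n
    refine Finset.prod_pos fun i _ => Finset.prod_pos fun k _ => ?_
    have := hv i; positivity
  have hPa : ∀ n : ℕ, 0 < ∏ i, (a i + (n:ℝ)) :=
    fun n => Finset.prod_pos fun i _ => by have := ha i; positivity
  have hPb : ∀ n : ℕ, 0 < ∏ i, (b i + (n:ℝ)) :=
    fun n => Finset.prod_pos fun i _ => by have := hb i; positivity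
  have hfpos : ∀ n, 0 < f n := by
    intro n; rw [hf n]; exact div_pos (hrise a ha n) (hrise b hb n)
  have hf0 : f 0 = 1 := by simp [hf 0, rise]
  have hfsucc : ∀ n : ℕ, f (n+1) = f n * ((∏ i, (a i + (n:ℝ))) / ∏ i, (b i + (n:ℝ))) := by
    intro n
    rw [hf n, hf (n+1)]
    have hA : (∏ i, rise (a i) (n+1)) = (∏ i, rise (a i) n) * ∏ i, (a i + (n:ℝ)) := by
      rw [← Finset.prod_mul_distrib]
      exact Finset.prod_congr rfl fun i _ => Finset.prod_range_succ _ _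
    have hB : (∏ i, rise (b i) (n+1)) = (∏ i, rise (b i) n) * ∏ i, (b i + (n:ℝ)) := by
      rw [← Finset.prod_mul_distrib]
      exact Finset.prod_congr rfl fun i _ => Finset.prod_range_succ _ _
    rw [hA, hB]
    field_simp
  have hdec : ∀ n : ℕ, f (n+1) ≤ f n := by
    intro n
    rw [hfsucc n]
    have : (∏ i, (a i + (n:ℝ))) / ∏ i, (b i + (n:ℝ)) ≤ 1 :=
      (div_le_one (hPb n)).mpr (prodP ha hb he n)
    nlinarith [hfpos n]
  have hmono : ∀ m n : ℕ, m ≤ n → f n ≤ f m := by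
    intro m n hmn
    induction n with
    | zero => interval_cases m; exact le_refl _
    | succ k ih =>
      rcases Nat.eq_or_lt_of_le hmn with h | h
      · subst h; exact le_refl _
      · exact le_trans (hdec k) (ih (Nat.lt_succ_iff.mp h))
  have hf1le : f 1 ≤ 1 := hf0 ▸ hmono 0 1 (by norm_num)
  have hf2le : f 2 ≤ f 1 := hmono 1 2 (by norm_num)
  set c : ℝ := f 2 / f 1 with hc
  have hcpos : 0 < c := div_pos (hfpos 2) (hfpos 1)
  have hc1 : f 2 = f 1 * c := by
    rw [hc, mul_comm, div_mul_cancel₀ _ (hfpos 1).ne']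
  -- ratio lower bound
  have hrge : ∀ n : ℕ, 1 ≤ n → c ≤ (∏ i, (a i + (n:ℝ))) / ∏ i, (b i + (n:ℝ)) := by
    intro n hn
    have hcval : c = (∏ i, (a i + (1:ℝ))) / ∏ i, (b i + (1:ℝ)) := by
      have h2 := hfsucc 1
      norm_num at h2
      rw [hc, h2, mul_div_assoc]; rw [mul_div_cancel₀ _ (hfpos 1).ne']
    rw [hcval]
    rw [div_le_div_iff₀ (by have := hPb 1; simpa using this) (hPb n)]
    have hq1 := prodQ ha hb hchain 1 n hn
    push_cast at hq1 ⊢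
    linarith
  -- lower bound on f n
  have hlow : ∀ n : ℕ, 1 ≤ n → f 1 * c ^ (n - 1) ≤ f n := by
    intro n hn
    induction n with
    | zero => omega
    | succ k ih =>
      rcases Nat.eq_or_lt_of_le hn with h | h
      · rw [← h]; norm_num
      · have hk1 : 1 ≤ k := by omega
        have ihk := ih hk1
        rw [hfsucc k]
        have hr := hrge k hk1
        have hfk := hfpos k
        have : f 1 * c ^ (k + 1 - 1) = (f 1 * c ^ (k - 1)) * c := by
          rw [mul_assoc, ← pow_succ]
          congr 2
          omega
        rw [this]
        have h1 : (f 1 * c ^ (k - 1)) * c ≤ f k * c :=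
          mul_le_mul_of_nonneg_right ihk hcpos.le
        have h2 : f k * c ≤ f k * ((∏ i, (a i + (k:ℝ))) / ∏ i, (b i + (k:ℝ))) :=
          mul_le_mul_of_nonneg_left hr hfk.le
        linarith
  -- series setup
  set S : ℕ → ℝ := fun n => f n * x ^ n / n.factorial with hS
  have hSnn : ∀ n, 0 ≤ S n := fun n => by
    have := hfpos n
    have : (0:ℝ) ≤ f n := this.le
    positivity
  have hfle1 : ∀ n, f n ≤ 1 := fun n => by
    rcases Nat.eq_zero_or_pos n with h | h
    · subst h; rw [hf0]
    · exact le_trans (hmono 1 n h) hf1le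
  have hSle : ∀ n, S n ≤ x ^ n / n.factorial := fun n => by
    rw [hS]
    have h1 : (0:ℝ) ≤ x ^ n := pow_nonneg hx n
    have h2 : (0:ℝ) < (n.factorial : ℝ) := by positivity
    exact div_le_div₀ h1 (by nlinarith [hfle1 n, (hfpos n).le]) h2 le_rfl
  have hSum : Summable S :=
    Summable.of_nonneg_of_le hSnn hSle (Real.summable_pow_div_factorial x)
  have hEsum := Real.summable_pow_div_factorial x
  have hS0 : S 0 = 1 := by simp [hS, hf0]
  have hS1 : S 1 = f 1 * x := by simp [hS]
  constructor
  · -- lower bound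
    set K : ℝ := f 1 ^ 2 / f 2 with hK
    have hKc : K * c = f 1 := by
      rw [hK, hc]
      rw [div_mul_div_comm, div_eq_iff (mul_pos (hfpos 2) (hfpos 1)).ne']
      ring
    set L : ℕ → ℝ := fun n => K * ((c * x) ^ n / n.factorial) with hL
    have hLsum : Summable L := (Real.summable_pow_div_factorial (c*x)).mul_left K
    have hLt : (∑' n, L n) = K * Real.exp (c * x) := by
      rw [hL, tsum_mul_left, tsum_exp]
    have hsplitL : L 0 + (∑' n, L (n+1)) = ∑' n, L n := by
      simpa using Summable.sum_add_tsum_nat_add 1 hLsum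
    have hsplitS : S 0 + (∑' n, S (n+1)) = ∑' n, S n := by
      simpa using Summable.sum_add_tsum_nat_add 1 hSum
    have hL0 : L 0 = K := by simp [hL]
    have hterm : ∀ n, L (n+1) ≤ S (n+1) := by
      intro n
      have hlo := hlow (n+1) (by omega)
      simp only [Nat.add_sub_cancel] at hlo
      have hxp : (0:ℝ) ≤ x ^ (n+1) / (n+1).factorial := by positivity
      have h1 : f 1 * c ^ n * (x ^ (n+1) / (n+1).factorial)
          ≤ f (n+1) * (x ^ (n+1) / (n+1).factorial) :=
        mul_le_mul_of_nonneg_right hlo hxp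
      have hLeq : L (n+1) = f 1 * c ^ n * (x ^ (n+1) / (n+1).factorial) := by
        rw [hL]
        simp only [mul_pow]
        rw [← hKc]
        ring
      have hSeq : S (n+1) = f (n+1) * (x ^ (n+1) / (n+1).factorial) := by
        rw [hS]; ring
      rw [hLeq, hSeq]
      exact h1
    have htail : (∑' n, L (n+1)) ≤ ∑' n, S (n+1) :=
      Summable.tsum_le_tsum hterm ((summable_nat_add_iff 1).mpr hLsum)
        ((summable_nat_add_iff 1).mpr hSum)
    have : 1 + K * (Real.exp (c * x) - 1) = S 0 + (K * Real.exp (c*x) - L 0) := by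
      rw [hS0, hL0]; ring
    rw [this, ← hLt]
    calc S 0 + ((∑' n, L n) - L 0) = S 0 + ∑' n, L (n+1) := by
          rw [← hsplitL]; ring
      _ ≤ S 0 + ∑' n, S (n+1) := by linarith
      _ = ∑' n, S n := hsplitS
  · -- upper bound
    have hsplitS2 : (S 0 + S 1) + (∑' n, S (n+2)) = ∑' n, S n := by
      have := Summable.sum_add_tsum_nat_add 2 hSum
      simpa [Finset.sum_range_succ] using this
    have hsplitE2 : ((1:ℝ) + x) + (∑' n : ℕ, x ^ (n+2) / (n+2).factorial) = Real.exp x := by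
      have := Summable.sum_add_tsum_nat_add 2 hEsum
      rw [tsum_exp] at this
      simpa [Finset.sum_range_succ] using this
    have hUsum : Summable (fun n : ℕ => f 2 * (x ^ (n+2) / (n+2).factorial)) :=
      ((summable_nat_add_iff 2).mpr hEsum).mul_left (f 2)
    have htail : (∑' n, S (n+2)) ≤ ∑' n : ℕ, f 2 * (x ^ (n+2) / (n+2).factorial) := by
      refine Summable.tsum_le_tsum (fun n => ?_) ((summable_nat_add_iff 2).mpr hSum) hUsum
      have h1 : f (n+2) ≤ f 2 := hmono 2 (n+2) (by omega)
      have hxp : (0:ℝ) ≤ x ^ (n+2) / (n+2).factorial := by positivity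
      have : f (n+2) * (x ^ (n+2) / (n+2).factorial)
          ≤ f 2 * (x ^ (n+2) / (n+2).factorial) := mul_le_mul_of_nonneg_right h1 hxp
      calc S (n+2) = f (n+2) * (x ^ (n+2) / (n+2).factorial) := by rw [hS]; ring
        _ ≤ _ := this
    have hUt : (∑' n : ℕ, f 2 * (x ^ (n+2) / (n+2).factorial))
        = f 2 * (Real.exp x - (1 + x)) := by
      rw [tsum_mul_left]
      congr 1
      linarith [hsplitE2]
    rw [← hsplitS2, hS0, hS1]
    rw [hUt] at htail
    nlinarith [htail]
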